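/- Let α, β be real numbers with 4α + 6β² − 5β ≠ 0 and 6β ≠ 1. Define c_P = 3(−3β² − 2α + 2β) and c_F = 6(−36β² + 24β + 1 − 24α)(−α + β)/(−6β+1)². Then c_P − c_F = −9(4α + 6β² − 5β)²/(6β−1)², and in particular c_P < c_F. -/

import Mathlib

theorem stmt_2 (α β : ℝ) (h1 : 4*α + 6*β^2 - 5*β ≠ 0) (h2 : 6*β ≠ 1)
    (cP cF : ℝ)
    (hcP : cP = 3*(-3*β^2 - 2*α + 2*β))
    (hcF : cF = 6*(-36*β^2 + 24*β + 1 - 24*α)*(-α + β)/(-6*β+1)^2) :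
    cP - cF = -9*(4*α + 6*β^2 - 5*β)^2/(6*β-1)^2 ∧ cP < cF := by
  have hd : (6*β - 1) ≠ 0 := fun h => h2 (by linarith)
  have hd2 : ((6*β-1)^2) ≠ 0 := pow_ne_zero 2 hd
  have hdpos : (0:ℝ) < (6*β-1)^2 := lt_of_le_of_ne (sq_nonneg _) (Ne.symm hd2)
  have heq : cP - cF = -9*(4*α + 6*β^2 - 5*β)^2/(6*β-1)^2 := by
    rw [hcP, hcF]
    have : ((-6*β+1)^2) = (6*β-1)^2 := by ring
    rw [this]
    rw [eq_div_iff hd2, sub_mul, div_mul_cancel₀ _ hd2]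
    ring
  refine ⟨heq, ?_⟩
  have hnum : -9*(4*α + 6*β^2 - 5*β)^2 < 0 := by
    have := lt_of_le_of_ne (sq_nonneg (4*α + 6*β^2 - 5*β)) (Ne.symm (pow_ne_zero 2 h1))
    nlinarith
  have := div_neg_of_neg_of_pos hnum hdpos
  linarith [heq ▸ this]
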